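/- Let g : [0, n + 1/2] → ℝ be a continuous piecewise-linear function with g(0) = −1/2 and slopes ±1 on each half-integer interval, encoded by a sequence (σ_1,…,σ_{n+1}) with σ_j = (σ_{j,1}, σ_{j,2}) ∈ {±1}² for j ≤ n (slope σ_{j,1} on (j−1, j−1/2) and σ_{j,2} on (j−1/2, j)) and σ_{n+1} ∈ {±1} (slope on (n, n+1/2)). Assume (C1) σ_{1,1} = 1 and (C2) σ_{j,2} = 1 ⟹ σ_{j+1,1} = 1 for all j. Then, with M = max g: every x with g(x) = M has the form m + 1/2 with 0 ≤ m ≤ n integer, the segment after x has σ_{m+1} ∈ {(1,−1), 1}, and M is a nonnegative integer. -/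
import Mathlib


/-- The slope data: `σ_j = (σ_{j,1}, σ_{j,2})` for `1 ≤ j ≤ n` (0-indexed here) and the
final single slope `σ_{n+1} = σlast`. -/
def sigFull (n : ℕ) (σ : Fin n → ℤ × ℤ) (σlast : ℤ) (j : ℕ) : ℤ × ℤ :=
  if h : j < n then σ ⟨j, h⟩ else (σlast, σlast)

/-- The slope of `g` on the half-integer interval `(t/2, (t+1)/2)`:
`σ_{j,1}` on `(j-1, j-1/2)` and `σ_{j,2}` on `(j-1/2, j)`, and `σ_{n+1}` on `(n, n+1/2)`. -/
def plSlope (n : ℕ) (σ : Fin n → ℤ × ℤ) (σlast : ℤ) (t : ℕ) : ℤ :=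
  if t % 2 = 0 then (sigFull n σ σlast (t / 2)).1 else (sigFull n σ σlast (t / 2)).2

/-- The values of `g` at the half-integer grid points `t/2`, with `g(0) = -1/2`. -/
noncomputable def plVal (n : ℕ) (σ : Fin n → ℤ × ℤ) (σlast : ℤ) : ℕ → ℝ
  | 0 => -1/2
  | t + 1 => plVal n σ σlast t + (plSlope n σ σlast t : ℝ) / 2

/-- The continuous piecewise-linear function `g : [0, n+1/2] → ℝ` with `g(0) = -1/2`
encoded by the slope sequence `(σ_1, …, σ_n, σ_{n+1})`. -/
noncomputable def plFun (n : ℕ) (σ : Fin n → ℤ × ℤ) (σlast : ℤ) (x : ℝ) : ℝ :=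
  let t : ℕ := (⌊2 * x⌋).toNat
  plVal n σ σlast t + (x - t / 2) * (plSlope n σ σlast t : ℝ)

lemma plFun_grid (n : ℕ) (σ : Fin n → ℤ × ℤ) (σlast : ℤ) (t : ℕ) :
    plFun n σ σlast ((t : ℝ) / 2) = plVal n σ σlast t := by
  unfold plFun
  have h2 : (2 : ℝ) * ((t : ℝ) / 2) = (t : ℝ) := by ring
  rw [h2, Int.floor_natCast, Int.toNat_natCast]
  ring

/-- Under (C1) `σ_{1,1} = 1` and (C2) `σ_{j,2} = 1 ⟹ σ_{j+1,1} = 1`: every point where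
`g` attains its maximum `M` over `[0, n+1/2]` has the form `m + 1/2` with `0 ≤ m ≤ n`,
the segment after it satisfies `σ_{m+1} = (1,-1)` (resp. `σ_{n+1} = 1` if `m = n`),
and `M` is a nonnegative integer. -/
theorem pl_max_at_half_integers (n : ℕ) (σ : Fin n → ℤ × ℤ) (σlast : ℤ)
    (hσ : ∀ j : Fin n, ((σ j).1 = 1 ∨ (σ j).1 = -1) ∧ ((σ j).2 = 1 ∨ (σ j).2 = -1))
    (hlast : σlast = 1 ∨ σlast = -1)
    (hC1 : (sigFull n σ σlast 0).1 = 1)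
    (hC2 : ∀ j < n, (sigFull n σ σlast j).2 = 1 → (sigFull n σ σlast (j + 1)).1 = 1)
    (M : ℝ)
    (hM : IsGreatest (plFun n σ σlast '' Set.Icc 0 ((n : ℝ) + 1/2)) M) :
    (∀ x ∈ Set.Icc (0 : ℝ) ((n : ℝ) + 1/2), plFun n σ σlast x = M →
      ∃ m : ℕ, m ≤ n ∧ x = (m : ℝ) + 1/2 ∧
        (m < n → sigFull n σ σlast m = (1, -1)) ∧ (m = n → σlast = 1)) ∧
    ∃ z : ℕ, M = (z : ℝ) := by
  -- every slope is ±1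
  have hslope : ∀ t : ℕ, plSlope n σ σlast t = 1 ∨ plSlope n σ σlast t = -1 := by
    intro t
    unfold plSlope sigFull
    split_ifs with h1 h2 h2
    · exact (hσ _).1
    · exact hlast
    · exact (hσ _).2
    · exact hlast
  -- grid points up to 2n+1 are in the domain
  have hmem : ∀ t : ℕ, t ≤ 2 * n + 1 →
      ((t : ℝ) / 2) ∈ Set.Icc (0 : ℝ) ((n : ℝ) + 1 / 2) := by
    intro t ht
    constructor
    · positivity
    · have h : (t : ℝ) ≤ 2 * n + 1 := by exact_mod_cast ht
      linarith
  have hle : ∀ t : ℕ, t ≤ 2 * n + 1 → plVal n σ σlast t ≤ M := by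
    intro t ht
    exact hM.2 ⟨(t : ℝ) / 2, hmem t ht, plFun_grid n σ σlast t⟩
  -- the value at 1/2 is 0
  have hs0 : plSlope n σ σlast 0 = 1 := by simpa [plSlope] using hC1
  have hv1 : plVal n σ σlast 1 = 0 := by
    have h : plVal n σ σlast 1 =
        plVal n σ σlast 0 + (plSlope n σ σlast 0 : ℝ) / 2 := rfl
    rw [h, hs0]
    norm_num [plVal]
  have hM0 : (0 : ℝ) ≤ M := by
    have := hle 1 (by omega)
    linarith [hv1 ▸ this]
  -- values at grid points are half-integers of the right parity
  have hval : ∀ t : ℕ, ∃ k : ℤ,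
      plVal n σ σlast t = (k : ℝ) + (if t % 2 = 0 then -(1 / 2 : ℝ) else 0) := by
    intro t
    induction t with
    | zero => exact ⟨0, by norm_num [plVal]⟩
    | succ t ih =>
      obtain ⟨k, hk⟩ := ih
      have hrec : plVal n σ σlast (t + 1) =
          plVal n σ σlast t + (plSlope n σ σlast t : ℝ) / 2 := rfl
      by_cases hp : t % 2 = 0
      · have hp1 : (t + 1) % 2 = 1 := by omega
        rcases hslope t with hs | hs
        · exact ⟨k, by rw [hrec, hk, hs, hp1]; norm_num [hp]⟩
        · exact ⟨k - 1, by rw [hrec, hk, hs, hp1]; push_cast; norm_num [hp]; ring⟩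
      · have hp1 : (t + 1) % 2 = 0 := by omega
        rcases hslope t with hs | hs
        · exact ⟨k + 1, by rw [hrec, hk, hs, hp1]; push_cast; norm_num [hp]; ring⟩
        · exact ⟨k, by rw [hrec, hk, hs, hp1]; push_cast; norm_num [hp]⟩
  -- a maximum at a grid point must be at an odd grid point with the right slopes
  have hgrid : ∀ t : ℕ, t ≤ 2 * n + 1 → plVal n σ σlast t = M →
      ∃ m : ℕ, m ≤ n ∧ t = 2 * m + 1 ∧
        (m < n → sigFull n σ σlast m = (1, -1)) ∧ (m = n → σlast = 1) := by
    intro t ht hMt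
    rcases Nat.even_or_odd t with he | ho
    · exfalso
      obtain ⟨j, hj⟩ := he
      cases j with
      | zero =>
        have ht0 : t = 0 := by omega
        rw [ht0] at hMt
        have h0 : plVal n σ σlast 0 = -(1 / 2 : ℝ) := by norm_num [plVal]
        have := hle 1 (by omega)
        rw [hv1] at this
        rw [h0] at hMt
        linarith
      | succ k =>
        have htk : t = 2 * k + 2 := by omega
        have hps : plSlope n σ σlast (2 * k + 1) = (sigFull n σ σlast k).2 := by
          have h1 : (2 * k + 1) % 2 = 1 := by omega
          have h2 : (2 * k + 1) / 2 = k := by omega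
          simp [plSlope, h1, h2]
        have hrec1 : plVal n σ σlast (2 * k + 2) =
            plVal n σ σlast (2 * k + 1) + (plSlope n σ σlast (2 * k + 1) : ℝ) / 2 := rfl
        rcases hslope (2 * k + 1) with hs | hs
        · -- slope before the even grid point is +1; then (C2) gives +1 after too
          have hkn : k < n := by omega
          have hnext : (sigFull n σ σlast (k + 1)).1 = 1 := hC2 k hkn (hps.symm.trans hs)
          have hps2 : plSlope n σ σlast (2 * k + 2) = (sigFull n σ σlast (k + 1)).1 := by
            have h1 : (2 * k + 2) % 2 = 0 := by omega
            have h2 : (2 * k + 2) / 2 = k + 1 := by omega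
            simp [plSlope, h1, h2]
          have hrec2 : plVal n σ σlast (2 * k + 3) =
              plVal n σ σlast (2 * k + 2) + (plSlope n σ σlast (2 * k + 2) : ℝ) / 2 := rfl
          have hle3 := hle (2 * k + 3) (by omega)
          rw [htk] at hMt
          rw [hrec2, hps2, hnext, hMt] at hle3
          norm_num at hle3
        · have hle1 := hle (2 * k + 1) (by omega)
          rw [htk] at hMt
          rw [hrec1, hs] at hMt
          push_cast at hMt
          linarith
    · obtain ⟨m, hm⟩ := ho
      have hmn : m ≤ n := by omega
      have hpsL : plSlope n σ σlast (2 * m) = (sigFull n σ σlast m).1 := by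
        have h1 : (2 * m) % 2 = 0 := by omega
        have h2 : (2 * m) / 2 = m := by omega
        simp [plSlope, h1, h2]
      have hrecL : plVal n σ σlast (2 * m + 1) =
          plVal n σ σlast (2 * m) + (plSlope n σ σlast (2 * m) : ℝ) / 2 := rfl
      rw [hm] at hMt
      have hL1 : plSlope n σ σlast (2 * m) = 1 := by
        rcases hslope (2 * m) with h | h
        · exact h
        · exfalso
          have hleL := hle (2 * m) (by omega)
          rw [hrecL, h] at hMt
          push_cast at hMt
          linarith
      have h1 : (sigFull n σ σlast m).1 = 1 := hpsL.symm.trans hL1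
      refine ⟨m, hmn, hm, ?_, ?_⟩
      · intro hmltn
        have hpsR : plSlope n σ σlast (2 * m + 1) = (sigFull n σ σlast m).2 := by
          have ha : (2 * m + 1) % 2 = 1 := by omega
          have hb : (2 * m + 1) / 2 = m := by omega
          simp [plSlope, ha, hb]
        have hR : plSlope n σ σlast (2 * m + 1) = -1 := by
          rcases hslope (2 * m + 1) with h | h
          · exfalso
            have hrecR : plVal n σ σlast (2 * m + 2) =
                plVal n σ σlast (2 * m + 1) + (plSlope n σ σlast (2 * m + 1) : ℝ) / 2 := rfl
            have hleR := hle (2 * m + 2) (by omega)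
            rw [hrecR, h, hMt] at hleR
            norm_num at hleR
          · exact h
        have h2 : (sigFull n σ σlast m).2 = -1 := hpsR.symm.trans hR
        exact Prod.ext h1 h2
      · intro hmeqn
        have hh : (sigFull n σ σlast n).1 = σlast := by simp [sigFull]
        rw [hmeqn] at h1
        rw [hh] at h1
        exact h1
  -- any maximizer lies on the grid
  have hreduce : ∀ x ∈ Set.Icc (0 : ℝ) ((n : ℝ) + 1 / 2), plFun n σ σlast x = M →
      ∃ t : ℕ, t ≤ 2 * n + 1 ∧ plVal n σ σlast t = M ∧ x = (t : ℝ) / 2 := by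
    intro x hx hgx
    have hx0 : (0 : ℝ) ≤ x := hx.1
    have hx1 : x ≤ (n : ℝ) + 1 / 2 := hx.2
    have hfl0 : (0 : ℤ) ≤ ⌊2 * x⌋ := Int.floor_nonneg.mpr (by linarith)
    have hfx : plFun n σ σlast x =
        plVal n σ σlast ((⌊2 * x⌋).toNat) +
          (x - ((⌊2 * x⌋).toNat : ℝ) / 2) * (plSlope n σ σlast ((⌊2 * x⌋).toNat) : ℝ) := rfl
    set t0 : ℕ := (⌊2 * x⌋).toNat with ht0def
    have hcast : ((t0 : ℤ) : ℝ) = ((⌊2 * x⌋ : ℤ) : ℝ) := by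
      rw [ht0def, Int.toNat_of_nonneg hfl0]
    have hcast' : (t0 : ℝ) = ((⌊2 * x⌋ : ℤ) : ℝ) := by exact_mod_cast hcast
    have hlb : (t0 : ℝ) ≤ 2 * x := by rw [hcast']; exact Int.floor_le _
    have hub : 2 * x < (t0 : ℝ) + 1 := by rw [hcast']; exact Int.lt_floor_add_one _
    have ht0le : t0 ≤ 2 * n + 1 := by
      have h : (t0 : ℝ) ≤ 2 * (n : ℝ) + 1 := by linarith
      exact_mod_cast h
    have hxeq : x = (t0 : ℝ) / 2 := by
      by_contra hne
      have hlt : (t0 : ℝ) / 2 < x := lt_of_le_of_ne (by linarith) (fun h => hne h.symm)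
      rw [hfx] at hgx
      rcases hslope t0 with hs | hs
      · have ht0' : t0 + 1 ≤ 2 * n + 1 := by
          have h : (t0 : ℝ) < 2 * (n : ℝ) + 1 := by linarith
          have h' : t0 < 2 * n + 1 := by exact_mod_cast h
          omega
        have hle1 := hle (t0 + 1) ht0'
        have hrec : plVal n σ σlast (t0 + 1) =
            plVal n σ σlast t0 + (plSlope n σ σlast t0 : ℝ) / 2 := rfl
        rw [hrec, hs] at hle1
        rw [hs] at hgx
        push_cast at hgx hle1
        nlinarith
      · have hle1 := hle t0 ht0le
        rw [hs] at hgx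
        push_cast at hgx
        nlinarith
    have hMv : plVal n σ σlast t0 = M := by
      rw [hfx, ← hxeq] at hgx
      simpa using hgx
    exact ⟨t0, ht0le, hMv, hxeq⟩
  constructor
  · intro x hx hgx
    obtain ⟨t, ht, hMt, hxt⟩ := hreduce x hx hgx
    obtain ⟨m, hmn, htm, hc1, hc2⟩ := hgrid t ht hMt
    refine ⟨m, hmn, ?_, hc1, hc2⟩
    rw [hxt, htm]
    push_cast
    ring
  · obtain ⟨x, hx, hgx⟩ := hM.1
    obtain ⟨t, ht, hMt, _⟩ := hreduce x hx hgx
    obtain ⟨m, _, htm, _, _⟩ := hgrid t ht hMt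
    obtain ⟨k, hk⟩ := hval t
    have hodd : t % 2 = 1 := by omega
    rw [hodd] at hk
    norm_num at hk
    have hMk : M = (k : ℝ) := by rw [← hMt, hk]
    have hk0 : (0 : ℤ) ≤ k := by
      have : (0 : ℝ) ≤ (k : ℝ) := by rw [← hMk]; exact hM0
      exact_mod_cast this
    refine ⟨k.toNat, ?_⟩
    rw [hMk]
    exact_mod_cast (Int.toNat_of_nonneg hk0).symm
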